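/- For n = 5, with p_1 = ρ(b_1 - q_2 b_0)/(b_2 - (q_1+q_2)b_1 + q_1 q_2 b_0) and p_2 = ρ(b_1 - q_1 b_0)/(b_2 - (q_1+q_2)b_1 + q_1 q_2 b_0), and (a_2 : a_1 : a_0) = (1 : -q_1-q_2 : q_1 q_2), the 1-form identity p_1 dq_1 + p_2 dq_2 = ρ (a_2 db_2 + a_1 db_1 + a_0 db_0)/(a_2 b_2 + a_1 b_1 + a_0 b_0) - ρ d log(a_2 b_2 + a_1 b_1 + a_0 b_0) + ρ da_2/a_2 holds; consequently dp_1 ∧ dq_1 + dp_2 ∧ dq_2 = ρ · d[(a_2 db_2 + a_1 db_1 + a_0 db_0)/(a_2 b_2 + a_1 b_1 + a_0 b_0)]. -/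

import Mathlib

/-!
Coordinates on an open subset of `ℂ⁵`: `x 0 = q₁`, `x 1 = q₂`, `x 2 = b₀`,
`x 3 = b₁`, `x 4 = b₂`, with `(a₂, a₁, a₀) = (1, -(q₁+q₂), q₁q₂)` (so `da₂ = 0`
and the term `ρ da₂/a₂` vanishes in this normalization), and
`S = a₂b₂ + a₁b₁ + a₀b₀ = b₂ - (q₁+q₂)b₁ + q₁q₂b₀`.
1-forms are maps to `(Fin 5 → ℂ) →L[ℂ] ℂ`, the exterior derivative of a 1-form
`η` being the 2-form `(u,v) ↦ (fderiv η x) u v - (fderiv η x) v u`.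
-/

noncomputable section

/-- `S = a₂b₂ + a₁b₁ + a₀b₀`. -/
def Sfun : (Fin 5 → ℂ) → ℂ := fun x => x 4 - (x 0 + x 1) * x 3 + x 0 * x 1 * x 2

/-- `p₁ = ρ(b₁ - q₂b₀)/S`. -/
def p1f (ρ : ℂ) : (Fin 5 → ℂ) → ℂ := fun x => ρ * (x 3 - x 1 * x 2) / Sfun x

/-- `p₂ = ρ(b₁ - q₁b₀)/S`. -/
def p2f (ρ : ℂ) : (Fin 5 → ℂ) → ℂ := fun x => ρ * (x 3 - x 0 * x 2) / Sfun x

/-- The coordinate differential `dxᵢ`. -/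
def dx (i : Fin 5) : (Fin 5 → ℂ) →L[ℂ] ℂ := ContinuousLinearMap.proj i

/-- The 1-form `ω = p₁ dq₁ + p₂ dq₂`. -/
def ωf (ρ : ℂ) : (Fin 5 → ℂ) → ((Fin 5 → ℂ) →L[ℂ] ℂ) :=
  fun x => p1f ρ x • dx 0 + p2f ρ x • dx 1

/-- The 1-form `θ = (a₂ db₂ + a₁ db₁ + a₀ db₀)/S`. -/
def θf : (Fin 5 → ℂ) → ((Fin 5 → ℂ) →L[ℂ] ℂ) :=
  fun x => (Sfun x)⁻¹ • ((x 0 * x 1) • dx 2 + (-(x 0 + x 1)) • dx 3 + dx 4)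

set_option maxHeartbeats 2000000 in
/-- the 1-form identity
`p₁ dq₁ + p₂ dq₂ = ρ (a₂ db₂ + a₁ db₁ + a₀ db₀)/S - ρ dS/S (+ ρ da₂/a₂ = 0)`
holds where `S ≠ 0`; consequently
`dp₁ ∧ dq₁ + dp₂ ∧ dq₂ = ρ · d[(a₂ db₂ + a₁ db₁ + a₀ db₀)/S]`. -/
theorem stmt14 (ρ : ℂ) (hρ : ρ ≠ 0) (x : Fin 5 → ℂ) (hx : Sfun x ≠ 0) :
    ωf ρ x = ρ • θf x - (ρ * (Sfun x)⁻¹) • fderiv ℂ Sfun x ∧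
    ∀ u v : Fin 5 → ℂ,
      fderiv ℂ (ωf ρ) x u v - fderiv ℂ (ωf ρ) x v u
        = ρ * (fderiv ℂ θf x u v - fderiv ℂ θf x v u) := by
  have hpr : ∀ i : Fin 5, HasFDerivAt (fun y : Fin 5 → ℂ => y i) (dx i) x :=
    fun i => hasFDerivAt_apply i x
  have hS : HasFDerivAt Sfun _ x :=
    ((hpr 4).sub (((hpr 0).add (hpr 1)).mul (hpr 3))).add
      (((hpr 0).mul (hpr 1)).mul (hpr 2))
  have hSinv : HasFDerivAt (fun y => (Sfun y)⁻¹) _ x :=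
    (hasFDerivAt_inv' (𝕜 := ℂ) hx).comp x hS
  have hp1 : HasFDerivAt (fun y : Fin 5 → ℂ => ρ * (y 3 - y 1 * y 2) * (Sfun y)⁻¹) _ x :=
    (((hpr 3).sub ((hpr 1).mul (hpr 2))).const_mul ρ).mul hSinv
  have hp2 : HasFDerivAt (fun y : Fin 5 → ℂ => ρ * (y 3 - y 0 * y 2) * (Sfun y)⁻¹) _ x :=
    (((hpr 3).sub ((hpr 0).mul (hpr 2))).const_mul ρ).mul hSinv
  have e1 : ωf ρ = fun y => (ρ * (y 3 - y 1 * y 2) * (Sfun y)⁻¹) • dx 0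
      + (ρ * (y 3 - y 0 * y 2) * (Sfun y)⁻¹) • dx 1 := by
    funext y; simp [ωf, p1f, p2f, div_eq_mul_inv]
  have hω' := (hp1.smul_const (dx 0)).add (hp2.smul_const (dx 1))
  rw [show ((fun y : Fin 5 → ℂ => (ρ * (y 3 - y 1 * y 2) * (Sfun y)⁻¹) • dx 0) + fun y => (ρ * (y 3 - y 0 * y 2) * (Sfun y)⁻¹) • dx 1) = ωf ρ from e1.symm] at hω'
  have hF : HasFDerivAt
      (fun y : Fin 5 → ℂ => (y 0 * y 1) • dx 2 + (-(y 0 + y 1)) • dx 3 + dx 4) _ x :=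
    ((((hpr 0).mul (hpr 1)).smul_const (dx 2)).add
      ((((hpr 0).add (hpr 1)).neg).smul_const (dx 3))).add_const (dx 4)
  have hθ : HasFDerivAt θf _ x := hSinv.smul hF
  constructor
  · rw [hS.fderiv]
    ext v
    simp only [ωf, θf, p1f, p2f, dx, Sfun, ContinuousLinearMap.add_apply,
      ContinuousLinearMap.smul_apply, ContinuousLinearMap.proj_apply, smul_eq_mul,
      ContinuousLinearMap.sub_apply, Pi.add_apply, Pi.mul_apply] at hx ⊢
    field_simp
    ring
  · intro u v
    rw [hω'.fderiv, hθ.fderiv]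
    simp only [ContinuousLinearMap.add_apply, ContinuousLinearMap.smul_apply,
      ContinuousLinearMap.smulRight_apply, ContinuousLinearMap.comp_apply,
      ContinuousLinearMap.neg_apply, ContinuousLinearMap.mulLeftRight_apply,
      ContinuousLinearMap.sub_apply, ContinuousLinearMap.coe_sub',
      ContinuousLinearMap.proj_apply, dx, Sfun, smul_eq_mul, Pi.sub_apply,
      neg_mul, mul_neg, neg_neg, Pi.add_apply, Pi.mul_apply] at hx ⊢
    field_simp
    ring

end
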